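/- For the explicit piecewise linear density f one has b_n < c_n for all large n and f(c_n)/f(b_n) = ln(n+1) → ∞ as n → ∞; consequently f is not almost decreasing: for every x₀ ≥ 0, sup_{x₀ ≤ x ≤ y < ∞} f(y)/f(x) = ∞. -/

import Mathlib

open MeasureTheory Filter Set

noncomputable section

/-- `a_n = 2^(n²)`. -/
def aSeq (n : ℕ) : ℝ := 2 ^ (n ^ 2)

/-- `m_n` : the least positive integer `k` with `k ≥ (√5/√6)·n`. -/
def mIdx (n : ℕ) : ℕ := max 1 ⌈(Real.sqrt 5 / Real.sqrt 6) * (n : ℝ)⌉₊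

/-- `b_n = a_n + a_{m_n}·(ln (n+1))²`. -/
def bSeq (n : ℕ) : ℝ := aSeq n + aSeq (mIdx n) * (Real.log ((n : ℝ) + 1)) ^ 2

/-- `c_n = (a_{n+1} + b_n)/2`. -/
def cSeq (n : ℕ) : ℝ := (aSeq (n + 1) + bSeq n) / 2

/-- `f` is affine (the linear interpolation of its endpoint values) on `[p, q]`. -/
def AffineOnIcc (f : ℝ → ℝ) (p q : ℝ) : Prop :=
  ∀ x ∈ Set.Icc p q, f x = f p + (x - p) / (q - p) * (f q - f p)

/-- The explicit continuous piecewise linear construction `f₀ : [0,∞) → (0,∞)`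
with `f₀(0) = 1`, `f₀(a_n) = 2 a_n⁻³`, `f₀(b_n) = 2 a_n⁻³ / ln(n+1)`,
`f₀(c_n) = 2 a_n⁻³`, affine on `[0,a₁]`, `[a_n,b_n]`, `[b_n,c_n]`, `[c_n,a_{n+1}]`. -/
def PWConstruction (f₀ : ℝ → ℝ) : Prop :=
  ContinuousOn f₀ (Set.Ici 0) ∧
  (∀ x : ℝ, 0 ≤ x → 0 < f₀ x) ∧
  f₀ 0 = 1 ∧
  (∀ n : ℕ, 1 ≤ n →
    f₀ (aSeq n) = 2 / (aSeq n) ^ 3 ∧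
    f₀ (bSeq n) = 2 / (aSeq n) ^ 3 / Real.log ((n : ℝ) + 1) ∧
    f₀ (cSeq n) = 2 / (aSeq n) ^ 3) ∧
  AffineOnIcc f₀ 0 (aSeq 1) ∧
  (∀ n : ℕ, 1 ≤ n →
    AffineOnIcc f₀ (aSeq n) (bSeq n) ∧
    AffineOnIcc f₀ (bSeq n) (cSeq n) ∧
    AffineOnIcc f₀ (cSeq n) (aSeq (n + 1)))

/-- The normalized extension `f = f₀ / ∫₀^∞ f₀(y) dy`, extended by `0` on `(-∞,0)`. -/
def normExt (f₀ : ℝ → ℝ) : ℝ → ℝ :=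
  fun x => if x < 0 then 0 else f₀ x / ∫ y in Set.Ici (0:ℝ), f₀ y

lemma aSeq_pos (n : ℕ) : 0 < aSeq n := by unfold aSeq; positivity

lemma aSeq_mono : Monotone aSeq := fun m n h =>
  pow_le_pow_right₀ one_le_two (Nat.pow_le_pow_left h 2)

lemma logn_pos {n : ℕ} (hn : 1 ≤ n) : 0 < Real.log ((n : ℝ) + 1) := by
  apply Real.log_pos
  have : (1:ℝ) ≤ (n:ℝ) := by exact_mod_cast hn
  linarith

lemma mIdx_le {n : ℕ} (hn : 1 ≤ n) : mIdx n ≤ n := by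
  unfold mIdx
  apply max_le hn
  rw [Nat.ceil_le]
  have h56 : Real.sqrt 5 / Real.sqrt 6 ≤ 1 := by
    rw [div_le_one (by positivity)]
    exact Real.sqrt_le_sqrt (by norm_num)
  calc Real.sqrt 5 / Real.sqrt 6 * (n:ℝ) ≤ 1 * (n:ℝ) := by
        apply mul_le_mul_of_nonneg_right h56 (by positivity)
    _ = (n:ℝ) := one_mul _

lemma log_le_n (n : ℕ) : Real.log ((n : ℝ) + 1) ≤ n := by
  have := Real.log_le_sub_one_of_pos (x := (n:ℝ)+1) (by positivity)
  linarith

lemma aSeq_succ (n : ℕ) : aSeq (n+1) = aSeq n * 2 ^ (2*n+1) := by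
  unfold aSeq
  rw [← pow_add]
  congr 1
  ring

lemma bSeq_lt_aSeq_succ {n : ℕ} (hn : 1 ≤ n) : bSeq n < aSeq (n+1) := by
  have hL : 0 < Real.log ((n : ℝ) + 1) := logn_pos hn
  have hLn : Real.log ((n : ℝ) + 1) ≤ n := log_le_n n
  have hL2 : (Real.log ((n : ℝ) + 1))^2 ≤ (n:ℝ)^2 :=
    pow_le_pow_left₀ hL.le hLn 2
  have ham : aSeq (mIdx n) ≤ aSeq n := aSeq_mono (mIdx_le hn)
  have hb : bSeq n ≤ aSeq n * (1 + (n:ℝ)^2) := by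
    unfold bSeq
    have : aSeq (mIdx n) * (Real.log ((n : ℝ) + 1))^2 ≤ aSeq n * (n:ℝ)^2 :=
      mul_le_mul ham hL2 (by positivity) (aSeq_pos n).le
    linarith
  have hnat : 1 + n^2 < 2^(2*n+1) := by
    have h1 : n < 2^n := Nat.lt_two_pow_self (n := n)
    have h2 : n^2 < (2^n)^2 := by
      rcases Nat.eq_zero_or_pos n with h | h
      · subst h; norm_num
      · exact Nat.pow_lt_pow_left h1 (by norm_num)
    have h3 : (2^n)^2 = 2^(2*n) := by rw [← pow_mul]; ring_nf
    have h4 : (1:ℕ) ≤ 2^(2*n) := Nat.one_le_two_pow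
    have h5 : 2^(2*n+1) = 2^(2*n) + 2^(2*n) := by rw [pow_succ]; ring
    omega
  have hreal : (1:ℝ) + (n:ℝ)^2 < 2^(2*n+1) := by exact_mod_cast hnat
  calc bSeq n ≤ aSeq n * (1 + (n:ℝ)^2) := hb
    _ < aSeq n * 2^(2*n+1) := by
        apply mul_lt_mul_of_pos_left hreal (aSeq_pos n)
    _ = aSeq (n+1) := (aSeq_succ n).symm

lemma aSeq_lt_bSeq {n : ℕ} (hn : 1 ≤ n) : aSeq n < bSeq n := by
  unfold bSeq
  have hL : 0 < Real.log ((n : ℝ) + 1) := logn_pos hn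
  have := aSeq_pos (mIdx n)
  nlinarith [mul_pos this (pow_pos hL 2)]

lemma bSeq_lt_cSeq {n : ℕ} (hn : 1 ≤ n) : bSeq n < cSeq n := by
  have := bSeq_lt_aSeq_succ hn
  unfold cSeq; linarith

lemma cSeq_lt_aSeq_succ {n : ℕ} (hn : 1 ≤ n) : cSeq n < aSeq (n+1) := by
  have := bSeq_lt_aSeq_succ hn
  unfold cSeq; linarith

lemma affine_le {f : ℝ → ℝ} {p q M x : ℝ} (h : AffineOnIcc f p q) (hpq : p < q)
    (hx : x ∈ Set.Icc p q) (hp : f p ≤ M) (hq : f q ≤ M) : f x ≤ M := by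
  rw [h x hx]
  set t := (x - p) / (q - p) with ht
  have ht0 : 0 ≤ t := div_nonneg (by linarith [hx.1]) (by linarith)
  have ht1 : t ≤ 1 := (div_le_one (by linarith)).2 (by linarith [hx.2])
  nlinarith [mul_nonneg ht0 (sub_nonneg.2 hq), mul_nonneg (sub_nonneg.2 ht1) (sub_nonneg.2 hp)]

lemma f0_bound {f₀ : ℝ → ℝ} (hf₀ : PWConstruction f₀) {n : ℕ} (hn : 1 ≤ n)
    {x : ℝ} (hx : x ∈ Set.Icc (aSeq n) (aSeq (n+1))) : f₀ x ≤ 6 / aSeq n ^ 3 := by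
  obtain ⟨hcont, hpos, h0, hvals, haff0, haff⟩ := hf₀
  obtain ⟨hfa, hfb, hfc⟩ := hvals n hn
  obtain ⟨hab, hbc, hca⟩ := haff n hn
  have ha := aSeq_pos n
  have hL : 0 < Real.log ((n : ℝ) + 1) := logn_pos hn
  have hL2 : Real.log 2 ≤ Real.log ((n : ℝ) + 1) := by
    apply Real.log_le_log (by norm_num)
    have : (1:ℝ) ≤ (n:ℝ) := by exact_mod_cast hn
    linarith
  have hL3 : (1:ℝ)/3 ≤ Real.log ((n : ℝ) + 1) := by
    have := Real.log_two_gt_d9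
    linarith
  have hMa : f₀ (aSeq n) ≤ 6 / aSeq n ^ 3 := by
    rw [hfa]; gcongr; norm_num
  have hMb : f₀ (bSeq n) ≤ 6 / aSeq n ^ 3 := by
    rw [hfb, div_div]
    rw [div_le_div_iff₀ (by positivity) (by positivity)]
    have h2 : aSeq n ^ 3 * (1/3 : ℝ) ≤ aSeq n ^ 3 * Real.log ((n : ℝ) + 1) := by
      apply mul_le_mul_of_nonneg_left hL3 (by positivity)
    nlinarith
  have hMc : f₀ (cSeq n) ≤ 6 / aSeq n ^ 3 := by
    rw [hfc]; gcongr; norm_num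
  have hMa' : f₀ (aSeq (n+1)) ≤ 6 / aSeq n ^ 3 := by
    rw [(hvals (n+1) (by omega)).1]
    have h1 := aSeq_mono (Nat.le_succ n)
    have h2 := aSeq_pos (n+1)
    have hle : aSeq n ^ 3 ≤ aSeq (n+1) ^ 3 := pow_le_pow_left₀ ha.le h1 3
    have h3 : (0:ℝ) < aSeq (n+1)^3 := by positivity
    rw [div_le_div_iff₀ (by positivity) (by positivity)]
    nlinarith
  rcases le_or_gt x (bSeq n) with h1 | h1
  · exact affine_le hab (aSeq_lt_bSeq hn) ⟨hx.1, h1⟩ hMa hMb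
  rcases le_or_gt x (cSeq n) with h2 | h2
  · exact affine_le hbc (bSeq_lt_cSeq hn) ⟨h1.le, h2⟩ hMb hMc
  · exact affine_le hca (cSeq_lt_aSeq_succ hn) ⟨h2.le, hx.2⟩ hMc hMa'

lemma exists_band {x : ℝ} (hx : aSeq 3 ≤ x) :
    ∃ n : ℕ, 3 ≤ n ∧ aSeq n ≤ x ∧ x < aSeq (n+1) := by
  have hQ : ∃ j : ℕ, x < aSeq (4 + j) := by
    refine ⟨⌈x⌉₊, ?_⟩
    set k := 4 + ⌈x⌉₊ with hk
    have h1 : x ≤ ⌈x⌉₊ := Nat.le_ceil x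
    have h2 : ((⌈x⌉₊ : ℕ) : ℝ) < 2 ^ k := by
      have : ⌈x⌉₊ < 2 ^ k := lt_of_lt_of_le (by omega) (Nat.lt_two_pow_self (n := k)).le
      exact_mod_cast this
    have h3 : (2:ℝ) ^ k ≤ aSeq k := by
      unfold aSeq
      apply pow_le_pow_right₀ one_le_two
      nlinarith
    linarith
  classical
  set j := Nat.find hQ with hj
  refine ⟨3 + j, by omega, ?_, ?_⟩
  · rcases Nat.eq_zero_or_pos j with h | h
    · rw [h]; exact hx
    · have := Nat.find_min hQ (m := j - 1) (by omega)
      push_neg at this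
      have e : 4 + (j - 1) = 3 + j := by omega
      rwa [e] at this
  · have := Nat.find_spec hQ
    have e : 4 + j = (3 + j) + 1 := by omega
    rwa [e] at this

lemma aSq_le (n : ℕ) (hn : 3 ≤ n) : aSeq (n+1) ^ 2 ≤ 32 * aSeq n ^ 3 := by
  unfold aSeq
  rw [← pow_mul, ← pow_mul]
  have h32 : (32:ℝ) = 2^5 := by norm_num
  rw [h32, ← pow_add]
  apply pow_le_pow_right₀ one_le_two
  nlinarith

lemma f0_bound_sq {f₀ : ℝ → ℝ} (hf₀ : PWConstruction f₀) {x : ℝ} (hx : aSeq 3 ≤ x) :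
    f₀ x ≤ 192 / x ^ 2 := by
  obtain ⟨n, hn3, h1, h2⟩ := exists_band hx
  have hb := f0_bound hf₀ (by omega) (x := x) ⟨h1, h2.le⟩
  have ha := aSeq_pos n
  have hxpos : 0 < x := lt_of_lt_of_le ha h1
  have hx2 : x ^ 2 ≤ 32 * aSeq n ^ 3 := by
    calc x^2 ≤ aSeq (n+1)^2 := by nlinarith
      _ ≤ 32 * aSeq n ^ 3 := aSq_le n hn3
  calc f₀ x ≤ 6 / aSeq n ^ 3 := hb
    _ ≤ 192 / x ^ 2 := by
        rw [div_le_div_iff₀ (by positivity) (by positivity)]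
        nlinarith

lemma integrableOn_f0 {f₀ : ℝ → ℝ} (hf₀ : PWConstruction f₀) :
    IntegrableOn f₀ (Set.Ici 0) := by
  have ha3 := aSeq_pos 3
  have hsplit : Set.Ici (0:ℝ) = Set.Icc 0 (aSeq 3) ∪ Set.Ici (aSeq 3) :=
    (Set.Icc_union_Ici_eq_Ici ha3.le).symm
  rw [hsplit]
  apply MeasureTheory.IntegrableOn.union
  · exact (hf₀.1.mono (Set.Icc_subset_Ici_self.trans (by simp))).integrableOn_Icc
  · have hg : IntegrableOn (fun x : ℝ => 192 * x ^ (-2:ℝ)) (Set.Ici (aSeq 3)) := by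
      rw [integrableOn_Ici_iff_integrableOn_Ioi]
      exact (integrableOn_Ioi_rpow_of_lt (by norm_num) ha3).const_mul 192
    apply MeasureTheory.Integrable.mono' hg
    · exact (hf₀.1.mono (Set.Ici_subset_Ici.2 ha3.le)).aestronglyMeasurable measurableSet_Ici
    · filter_upwards [MeasureTheory.ae_restrict_mem measurableSet_Ici] with x hx
      have hxpos : (0:ℝ) < x := lt_of_lt_of_le ha3 hx
      have hfx := hf₀.2.1 x hxpos.le
      rw [Real.norm_of_nonneg hfx.le]
      have : x ^ (-2:ℝ) = (x^2)⁻¹ := by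
        rw [show (-2:ℝ) = -((2:ℕ):ℝ) by norm_num, Real.rpow_neg hxpos.le, Real.rpow_natCast]
      rw [this]
      have := f0_bound_sq hf₀ hx
      rw [div_eq_mul_inv] at this
      linarith

lemma integral_f0_pos {f₀ : ℝ → ℝ} (hf₀ : PWConstruction f₀) :
    0 < ∫ y in Set.Ici (0:ℝ), f₀ y := by
  rw [MeasureTheory.setIntegral_pos_iff_support_of_nonneg_ae ?h1 (integrableOn_f0 hf₀)]
  case h1 =>
    filter_upwards [MeasureTheory.ae_restrict_mem measurableSet_Ici] with x hx
    exact (hf₀.2.1 x hx).le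
  have hsub : Set.Ici (0:ℝ) ⊆ Function.support f₀ ∩ Set.Ici 0 := by
    intro x hx
    exact ⟨(hf₀.2.1 x hx).ne', hx⟩
  calc (0:ENNReal) < ⊤ := by simp
    _ = volume (Set.Ici (0:ℝ)) := Real.volume_Ici.symm
    _ ≤ volume (Function.support f₀ ∩ Set.Ici 0) := measure_mono hsub

lemma n_le_aSeq (n : ℕ) : (n:ℝ) ≤ aSeq n := by
  have h : n ≤ 2^(n^2) :=
    le_trans (Nat.lt_two_pow_self (n := n)).le
      (Nat.pow_le_pow_right (by norm_num) (Nat.le_self_pow two_ne_zero n))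
  unfold aSeq; exact_mod_cast h

theorem pw_density_not_almost_decreasing (f₀ : ℝ → ℝ)
    (hf₀ : PWConstruction f₀) :
    (∀ᶠ n in atTop, bSeq n < cSeq n) ∧
    (∀ n : ℕ, 1 ≤ n →
      normExt f₀ (cSeq n) / normExt f₀ (bSeq n) = Real.log ((n : ℝ) + 1)) ∧
    Tendsto (fun n : ℕ => normExt f₀ (cSeq n) / normExt f₀ (bSeq n)) atTop atTop ∧
    -- f is not almost decreasing: for every x₀ ≥ 0 the sup of the ratios is ∞
    (∀ x₀ : ℝ, 0 ≤ x₀ → ∀ C : ℝ,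
      ∃ x y : ℝ, x₀ ≤ x ∧ x ≤ y ∧ C < normExt f₀ y / normExt f₀ x) := by
  have hI : 0 < ∫ y in Set.Ici (0:ℝ), f₀ y := integral_f0_pos hf₀
  have hratio : ∀ n : ℕ, 1 ≤ n →
      normExt f₀ (cSeq n) / normExt f₀ (bSeq n) = Real.log ((n : ℝ) + 1) := by
    intro n hn
    have ha := aSeq_pos n
    have hb0 : (0:ℝ) ≤ bSeq n := le_of_lt (lt_trans ha (aSeq_lt_bSeq hn))
    have hc0 : (0:ℝ) ≤ cSeq n := le_trans hb0 (bSeq_lt_cSeq hn).le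
    obtain ⟨hfa, hfb, hfc⟩ := hf₀.2.2.2.1 n hn
    have hL := logn_pos hn
    have ha3 : (0:ℝ) < aSeq n ^ 3 := by positivity
    simp only [normExt, if_neg (not_lt.2 hc0), if_neg (not_lt.2 hb0)]
    rw [hfb, hfc]
    field_simp
  have hlog : Tendsto (fun n : ℕ => Real.log ((n:ℝ)+1)) atTop atTop :=
    Real.tendsto_log_atTop.comp
      (tendsto_atTop_add_const_right _ 1 tendsto_natCast_atTop_atTop)
  refine ⟨Filter.eventually_atTop.2 ⟨1, fun n hn => bSeq_lt_cSeq hn⟩, hratio, ?_, ?_⟩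
  · apply Tendsto.congr' _ hlog
    filter_upwards [eventually_ge_atTop 1] with n hn
    exact (hratio n hn).symm
  · intro x₀ hx₀ C
    obtain ⟨n, hn1, hnC⟩ :=
      ((eventually_ge_atTop (max 1 ⌈x₀⌉₊)).and (hlog.eventually_gt_atTop C)).exists
    have hn : 1 ≤ n := le_trans (le_max_left _ _) hn1
    refine ⟨bSeq n, cSeq n, ?_, (bSeq_lt_cSeq hn).le, ?_⟩
    · have h1 : x₀ ≤ (⌈x₀⌉₊ : ℝ) := Nat.le_ceil x₀
      have h2 : ((⌈x₀⌉₊ : ℕ) : ℝ) ≤ (n : ℝ) := by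
        exact_mod_cast le_trans (le_max_right 1 ⌈x₀⌉₊) hn1
      have h3 : (n:ℝ) ≤ aSeq n := n_le_aSeq n
      have h4 : aSeq n < bSeq n := aSeq_lt_bSeq hn
      linarith
    · rw [hratio n hn]
      exact hnC
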